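/- arXiv:2209.13581 — 4 statements merged into one kernel-verified Lean document; each statement's English description precedes it below -/
import Mathlib

section
/- For simplicial complexes X and Y, and σ an i-simplex of X, τ a j-simplex of Y with i+j = k−1, the combinatorial Laplacian of the join satisfies Δ_k^{X∗Y}(σ ⊗ τ) = (Δ_i^X σ) ⊗ τ + σ ⊗ (Δ_j^Y τ). -/
open Finsupp

attribute [local instance] Classical.propDecidable

variable (F : Type*) [Field F]
variable {V : Type*} [Fintype V] [LinearOrder V]

/-- The space of `F`-chains on the faces of cardinality `c` of the abstract simplicial
complex `K` (a face of cardinality `c` is a simplex of dimension `c − 1`; cardinality `0`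
gives the `(−1)`-dimensional simplex `∅` of the reduced chain complex). -/
abbrev Cc (K : Finset V → Prop) (c : ℕ) : Type _ :=
  {s : Finset V // s.card = c ∧ K s} →₀ F

/-- The boundary map `∂ : C_c → C_{c-1}` (in cardinality indexing) of the reduced chain
complex of `K`: a face maps to the alternating sum of its codimension-one subfaces, with
sign given by the position (in the ordering of `V`) of the removed vertex. -/
noncomputable def downC (K : Finset V → Prop) (c : ℕ) :
    Cc F K (c + 1) →ₗ[F] Cc F K c :=
  Finsupp.lsum F fun s => LinearMap.toSpanSingleton F _
    (∑ a ∈ s.1.attach,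
      if h : K (s.1.erase a.1) then
        ((-1 : F) ^ ((s.1.filter fun b => b < a.1).card)) •
          Finsupp.single
            (⟨s.1.erase a.1, by rw [Finset.card_erase_of_mem a.2, s.2.1]; omega, h⟩ :
              {s : Finset V // s.card = c ∧ K s}) 1
      else 0)

/-- The coboundary map `∂† : C_c → C_{c+1}`, the adjoint of `downC` with respect to the
inner product making the faces an orthonormal basis: a face maps to the signed sum of the
faces of `K` obtained by inserting one vertex. -/
noncomputable def upC (K : Finset V → Prop) (c : ℕ) :
    Cc F K c →ₗ[F] Cc F K (c + 1) :=
  Finsupp.lsum F fun t => LinearMap.toSpanSingleton F _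
    (∑ a : V,
      if h : a ∉ t.1 ∧ K (insert a t.1) then
        ((-1 : F) ^ ((t.1.filter fun b => b < a).card)) •
          Finsupp.single
            (⟨insert a t.1, by rw [Finset.card_insert_of_notMem h.1, t.2.1], h.2⟩ :
              {s : Finset V // s.card = c + 1 ∧ K s}) 1
      else 0)

/-- The combinatorial Laplacian `Δ = ∂†∂ + ∂∂†` of the reduced chain complex of `K`,
acting on chains of faces of cardinality `c` (i.e. simplices of dimension `c − 1`). -/
noncomputable def lapCard (K : Finset V → Prop) : (c : ℕ) → Cc F K c →ₗ[F] Cc F K c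
  | 0 => downC F K 0 ∘ₗ upC F K 0
  | (d + 1) => upC F K d ∘ₗ downC F K d + downC F K (d + 1) ∘ₗ upC F K (d + 1)

/-- The reduced Betti number `β̃_{c-1}` of `K` (in cardinality indexing: `redBettiC K c`
is the Betti number of dimension `c − 1`): the dimension of the kernel of the boundary map
out of the cardinality-`c` chains minus the rank of the boundary map into them. -/
noncomputable def redBettiC (K : Finset V → Prop) : ℕ → ℕ
  | 0 => Module.finrank F (Cc F K 0) -
      Module.finrank F (LinearMap.range (downC F K 0))
  | (d + 1) => Module.finrank F (LinearMap.ker (downC F K d)) -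
      Module.finrank F (LinearMap.range (downC F K (d + 1)))

section Join

variable {W : Type*} [Fintype W] [LinearOrder W]

noncomputable instance : Fintype (Lex (V ⊕ W)) := Fintype.ofEquiv (V ⊕ W) toLex

/-- Embedding of the left vertex set into the (lexicographically ordered) disjoint
union of the vertex sets, in which all left vertices precede all right vertices. -/
def embL : V ↪ Lex (V ⊕ W) :=
  ⟨fun v => toLex (Sum.inl v), fun _ _ h => Sum.inl_injective (toLex.injective h)⟩

/-- Embedding of the right vertex set into the disjoint union. -/
def embR : W ↪ Lex (V ⊕ W) :=
  ⟨fun w => toLex (Sum.inr w), fun _ _ h => Sum.inr_injective (toLex.injective h)⟩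

lemma mapEmb_disjoint (s : Finset V) (t : Finset W) :
    Disjoint (s.map embL) (t.map (embR : W ↪ Lex (V ⊕ W))) := by
  rw [Finset.disjoint_left]
  rintro x hx hy
  obtain ⟨v, -, rfl⟩ := Finset.mem_map.mp hx
  obtain ⟨w, -, hw⟩ := Finset.mem_map.mp hy
  exact Sum.inr_ne_inl (toLex.injective hw)

/-- The join `X ∗ Y` of two abstract simplicial complexes on disjoint vertex sets:
its faces are exactly the unions `σ ∪ τ` with `σ ∈ X ∪ {∅}` and `τ ∈ Y ∪ {∅}`
(`X` and `Y` are taken to contain `∅`). -/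
def joinK (X : Finset V → Prop) (Y : Finset W → Prop) : Finset (Lex (V ⊕ W)) → Prop :=
  fun u => ∃ s t, X s ∧ Y t ∧ u = s.map embL ∪ t.map embR

end Join

section JoinMaps

variable {W : Type*} [Fintype W] [LinearOrder W]
variable {X : Finset V → Prop} {Y : Finset W → Prop} {a b : ℕ}

/-- The basis face `σ ⊗ τ := σ ∪ τ` of the join complex associated with faces
`σ ∈ X` and `τ ∈ Y` (all vertices of `σ` precede those of `τ`). -/
noncomputable def ju (σ : {s : Finset V // s.card = a ∧ X s}) (τ : {t : Finset W // t.card = b ∧ Y t}) :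
    {u : Finset (Lex (V ⊕ W)) // u.card = a + b ∧ joinK X Y u} :=
  ⟨σ.1.map embL ∪ τ.1.map embR,
    by rw [Finset.card_union_of_disjoint (mapEmb_disjoint σ.1 τ.1), Finset.card_map,
        Finset.card_map, σ.2.1, τ.2.1],
    ⟨σ.1, τ.1, σ.2.2, τ.2.2, rfl⟩⟩

/-- The linear map `(·) ⊗ τ : C_a(X) → C_{a+b}(X ∗ Y)` sending a chain on `X` to its
join with the fixed face `τ` of `Y`. -/
noncomputable def Jright (τ : {t : Finset W // t.card = b ∧ Y t}) :
    Cc F X a →ₗ[F] Cc F (joinK X Y) (a + b) :=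
  Finsupp.lsum F fun s => LinearMap.toSpanSingleton F _ (Finsupp.single (ju s τ) 1)

/-- The linear map `σ ⊗ (·) : C_b(Y) → C_{a+b}(X ∗ Y)` sending a chain on `Y` to its
join with the fixed face `σ` of `X`. -/
noncomputable def Jleft (σ : {s : Finset V // s.card = a ∧ X s}) :
    Cc F Y b →ₗ[F] Cc F (joinK X Y) (a + b) :=
  Finsupp.lsum F fun t => LinearMap.toSpanSingleton F _ (Finsupp.single (ju σ t) 1)

end JoinMaps

set_option linter.unusedSectionVars false

section MyLapJoin

variable {W : Type*} [Fintype W] [LinearOrder W]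
variable {X : Finset V → Prop} {Y : Finset W → Prop} {a b c : ℕ}

/-- Canonical (classical-instance) union of finsets. -/
noncomputable def cU {α : Type*} (s t : Finset α) : Finset α :=
  @Union.union _ (@Finset.instUnion _ (fun a b => Classical.propDecidable (a = b))) s t

lemma cU_eq {α : Type*} (s t : Finset α) :
    cU s t = @Union.union _ (@Finset.instUnion _ (fun a b => Classical.propDecidable (a = b))) s t :=
  rfl

lemma union_to_cU {α : Type*} {i : DecidableEq α} (s t : Finset α) :
    @Union.union _ (@Finset.instUnion _ i) s t = cU s t := by
  cases Subsingleton.elim i (fun a b => Classical.propDecidable (a = b)); rfl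

lemma mem_cU {α : Type*} {x : α} {s t : Finset α} : x ∈ cU s t ↔ x ∈ s ∨ x ∈ t := by
  rw [cU_eq]; exact Finset.mem_union

/-- Canonical (classical-instance) `insert`. -/
noncomputable def cIns {α : Type*} (x : α) (s : Finset α) : Finset α :=
  @insert _ _ (@Finset.instInsert _ (fun a b => Classical.propDecidable (a = b))) x s

lemma cIns_eq {α : Type*} (x : α) (s : Finset α) :
    cIns x s = @insert _ _ (@Finset.instInsert _ (fun a b => Classical.propDecidable (a = b))) x s :=
  rfl

lemma insert_to_cIns {α : Type*} {i : DecidableEq α} (x : α) (s : Finset α) :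
    @insert _ _ (@Finset.instInsert _ i) x s = cIns x s := by
  cases Subsingleton.elim i (fun a b => Classical.propDecidable (a = b)); rfl

/-- Canonical (classical-instance) `Finset.erase`. -/
noncomputable def cErase {α : Type*} (s : Finset α) (x : α) : Finset α :=
  @Finset.erase _ (fun a b => Classical.propDecidable (a = b)) s x

lemma cErase_eq {α : Type*} (s : Finset α) (x : α) :
    cErase s x = @Finset.erase _ (fun a b => Classical.propDecidable (a = b)) s x := rfl

lemma erase_to_cErase {α : Type*} {i : DecidableEq α} (s : Finset α) (x : α) :
    @Finset.erase _ i s x = cErase s x := by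
  cases Subsingleton.elim i (fun a b => Classical.propDecidable (a = b)); rfl

lemma cErase_subset {α : Type*} {s : Finset α} {x : α} : cErase s x ⊆ s := by
  rw [cErase_eq]; exact Finset.erase_subset _ _

lemma card_cErase {α : Type*} {x : α} {s : Finset α} (h : x ∈ s) :
    (cErase s x).card = s.card - 1 := by
  rw [cErase_eq]; exact Finset.card_erase_of_mem h

lemma h_sum_cU {α M : Type*} [AddCommMonoid M] {s t : Finset α} (h : Disjoint s t)
    (f : α → M) : ∑ x ∈ cU s t, f x = ∑ x ∈ s, f x + ∑ x ∈ t, f x := by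
  letI : DecidableEq α := fun a b => Classical.propDecidable (a = b)
  exact Finset.sum_union h

lemma embL_apply (v : V) : (embL v : Lex (V ⊕ W)) = toLex (Sum.inl v) := rfl
lemma embR_apply (w : W) : (embR w : Lex (V ⊕ W)) = toLex (Sum.inr w) := rfl
lemma toLex_inl_eq (v : V) : (toLex (Sum.inl v) : Lex (V ⊕ W)) = embL v := rfl
lemma toLex_inr_eq (w : W) : (toLex (Sum.inr w) : Lex (V ⊕ W)) = embR w := rfl

lemma embL_mem_iff {s : Finset V} {t : Finset W} {v : V} :
    (embL v : Lex (V ⊕ W)) ∈ cU (s.map embL) (t.map embR) ↔ v ∈ s := by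
  simp only [mem_cU, Finset.mem_map]
  constructor
  · rintro (⟨x, hx, hxe⟩ | ⟨x, hx, hxe⟩)
    · rwa [← embL.injective hxe]
    · exact absurd (toLex.injective hxe) (Sum.inr_ne_inl)
  · exact fun hv => Or.inl ⟨v, hv, rfl⟩

lemma embR_mem_iff {s : Finset V} {t : Finset W} {w : W} :
    (embR w : Lex (V ⊕ W)) ∈ cU (s.map embL) (t.map embR) ↔ w ∈ t := by
  simp only [mem_cU, Finset.mem_map]
  constructor
  · rintro (⟨x, hx, hxe⟩ | ⟨x, hx, hxe⟩)
    · exact absurd (toLex.injective hxe) (Sum.inl_ne_inr)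
    · rwa [← embR.injective hxe]
  · exact fun hv => Or.inr ⟨w, hv, rfl⟩

lemma decomp_unique {s s' : Finset V} {t t' : Finset W}
    (h : cU (s.map embL) (t.map embR) = cU (s'.map (embL : V ↪ Lex (V ⊕ W))) (t'.map embR)) :
    s = s' ∧ t = t' := by
  constructor
  · ext v
    rw [← embL_mem_iff (t := t), h, embL_mem_iff]
  · ext w
    rw [← embR_mem_iff (s := s), h, embR_mem_iff]

lemma joinK_union_iff {s : Finset V} {t : Finset W} :
    joinK X Y (cU (s.map embL) (t.map embR)) ↔ X s ∧ Y t := by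
  constructor
  · rintro ⟨s', t', hs', ht', he⟩
    rw [union_to_cU] at he
    obtain ⟨rfl, rfl⟩ := decomp_unique he
    exact ⟨hs', ht'⟩
  · rintro ⟨hs, ht⟩
    exact ⟨s, t, hs, ht, by rw [union_to_cU]⟩

lemma filter_lt_embL (s : Finset V) (t : Finset W) (v : V) :
    ((cU (s.map embL) (t.map (embR : W ↪ Lex (V ⊕ W)))).filter (fun b => b < embL v)).card
      = (s.filter (fun b => b < v)).card := by
  letI : DecidableEq (Lex (V ⊕ W)) := fun a b => Classical.propDecidable (a = b)
  show (((s.map embL ∪ t.map embR)).filter (fun b => b < embL v)).card = _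
  rw [Finset.filter_union]
  have e1 : (t.map (embR : W ↪ Lex (V ⊕ W))).filter (fun b => b < embL v) = ∅ := by
    ext x
    simp only [Finset.mem_filter, Finset.mem_map, Finset.notMem_empty, iff_false, not_and]
    rintro ⟨w, hw, rfl⟩
    exact Sum.Lex.not_inr_lt_inl
  have e2 : (s.map (embL : V ↪ Lex (V ⊕ W))).filter (fun b => b < embL v)
      = (s.filter (fun b => b < v)).map embL := by
    rw [Finset.filter_map]
    congr 1
    apply Finset.filter_congr
    intro x _
    simp only [Function.comp_apply, embL_apply, Sum.Lex.inl_lt_inl_iff]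
  rw [e1, e2, Finset.union_empty, Finset.card_map]

lemma filter_lt_embR (s : Finset V) (t : Finset W) (w : W) :
    ((cU (s.map embL) (t.map (embR : W ↪ Lex (V ⊕ W)))).filter (fun b => b < embR w)).card
      = s.card + (t.filter (fun b => b < w)).card := by
  letI : DecidableEq (Lex (V ⊕ W)) := fun a b => Classical.propDecidable (a = b)
  show (((s.map embL ∪ t.map embR)).filter (fun b => b < embR w)).card = _
  rw [Finset.filter_union]
  have e1 : (s.map (embL : V ↪ Lex (V ⊕ W))).filter (fun b => b < embR w)
      = s.map embL := by
    apply Finset.filter_true_of_mem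
    intro x hx
    obtain ⟨v, hv, rfl⟩ := Finset.mem_map.mp hx
    exact Sum.Lex.inl_lt_inr v w
  have e2 : (t.map (embR : W ↪ Lex (V ⊕ W))).filter (fun b => b < embR w)
      = (t.filter (fun b => b < w)).map embR := by
    rw [Finset.filter_map]
    congr 1
    apply Finset.filter_congr
    intro x _
    simp only [Function.comp_apply, embR_apply, Sum.Lex.inr_lt_inr_iff]
  rw [e1, e2, Finset.card_union_of_disjoint, Finset.card_map, Finset.card_map]
  exact (mapEmb_disjoint s _).mono_right (Finset.map_subset_map.mpr (Finset.filter_subset _ _))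

lemma cIns_embL (v : V) (s : Finset V) (t : Finset W) :
    cIns (embL v : Lex (V ⊕ W)) (cU (s.map embL) (t.map embR))
      = cU ((cIns v s).map embL) (t.map embR) := by
  letI : DecidableEq V := fun a b => Classical.propDecidable (a = b)
  letI : DecidableEq (Lex (V ⊕ W)) := fun a b => Classical.propDecidable (a = b)
  show insert (embL v) (s.map embL ∪ t.map embR) = (insert v s).map embL ∪ t.map embR
  rw [Finset.map_insert, Finset.insert_union]

lemma cIns_embR (w : W) (s : Finset V) (t : Finset W) :
    cIns (embR w : Lex (V ⊕ W)) (cU (s.map embL) (t.map embR))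
      = cU (s.map embL) ((cIns w t).map embR) := by
  letI : DecidableEq W := fun a b => Classical.propDecidable (a = b)
  letI : DecidableEq (Lex (V ⊕ W)) := fun a b => Classical.propDecidable (a = b)
  show insert (embR w) (s.map embL ∪ t.map embR) = s.map embL ∪ (insert w t).map embR
  rw [Finset.map_insert, Finset.union_insert]

lemma cErase_embL (v : V) (s : Finset V) (t : Finset W) :
    cErase (cU (s.map embL) (t.map embR)) (embL v : Lex (V ⊕ W))
      = cU ((cErase s v).map embL) (t.map embR) := by
  letI : DecidableEq V := fun a b => Classical.propDecidable (a = b)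
  letI : DecidableEq (Lex (V ⊕ W)) := fun a b => Classical.propDecidable (a = b)
  show (s.map embL ∪ t.map embR).erase (embL v) = (s.erase v).map embL ∪ t.map embR
  rw [Finset.erase_union_distrib, Finset.map_erase]
  congr 1
  apply Finset.erase_eq_of_notMem
  intro hx
  obtain ⟨x, hx', hxe⟩ := Finset.mem_map.mp hx
  exact Sum.inr_ne_inl (toLex.injective hxe)

lemma cErase_embR (w : W) (s : Finset V) (t : Finset W) :
    cErase (cU (s.map embL) (t.map embR)) (embR w : Lex (V ⊕ W))
      = cU (s.map embL) ((cErase t w).map embR) := by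
  letI : DecidableEq W := fun a b => Classical.propDecidable (a = b)
  letI : DecidableEq (Lex (V ⊕ W)) := fun a b => Classical.propDecidable (a = b)
  show (s.map embL ∪ t.map embR).erase (embR w) = s.map embL ∪ (t.erase w).map embR
  rw [Finset.erase_union_distrib, Finset.map_erase]
  congr 1
  apply Finset.erase_eq_of_notMem
  intro hx
  obtain ⟨x, hx', hxe⟩ := Finset.mem_map.mp hx
  exact Sum.inl_ne_inr (toLex.injective hxe)

/-- Index-flexible version of `ju`, with canonical union. -/
noncomputable def ju2 (h : a + b = c) (σ : {s : Finset V // s.card = a ∧ X s})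
    (τ : {t : Finset W // t.card = b ∧ Y t}) :
    {u : Finset (Lex (V ⊕ W)) // u.card = c ∧ joinK X Y u} :=
  ⟨cU (σ.1.map embL) (τ.1.map embR),
    by
      letI : DecidableEq (Lex (V ⊕ W)) := fun a b => Classical.propDecidable (a = b)
      show (σ.1.map embL ∪ τ.1.map embR).card = c
      rw [Finset.card_union_of_disjoint (mapEmb_disjoint σ.1 τ.1), Finset.card_map,
        Finset.card_map, σ.2.1, τ.2.1, h],
    joinK_union_iff.mpr ⟨σ.2.2, τ.2.2⟩⟩

/-- The bilinear join map on chains. -/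
noncomputable def jj (F : Type*) [Field F] (h : a + b = c) :
    Cc F X a →ₗ[F] Cc F Y b →ₗ[F] Cc F (joinK X Y) c :=
  Finsupp.lsum F fun s => LinearMap.toSpanSingleton F _
    (Finsupp.lsum F fun t => LinearMap.toSpanSingleton F _
      (Finsupp.single (ju2 h s t) (1 : F)))

lemma jj_single (F : Type*) [Field F] (h : a + b = c)
    (σ : {s : Finset V // s.card = a ∧ X s}) (τ : {t : Finset W // t.card = b ∧ Y t}) :
    jj F h (Finsupp.single σ 1) (Finsupp.single τ 1) = Finsupp.single (ju2 h σ τ) 1 := by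
  simp [jj, Finsupp.lsum_single, LinearMap.toSpanSingleton_apply]

lemma up_cond_left_iff (σ : {s : Finset V // s.card = a ∧ X s})
    (τ : {t : Finset W // t.card = b ∧ Y t}) (v : V) :
    ((embL v : Lex (V ⊕ W)) ∉ cU (σ.1.map embL) (τ.1.map embR) ∧
        joinK X Y (cIns (embL v : Lex (V ⊕ W)) (cU (σ.1.map embL) (τ.1.map embR))))
      ↔ (v ∉ σ.1 ∧ X (cIns v σ.1)) := by
  rw [cIns_embL, embL_mem_iff, joinK_union_iff]
  exact ⟨fun ⟨h1, h2, _⟩ => ⟨h1, h2⟩, fun ⟨h1, h2⟩ => ⟨h1, h2, τ.2.2⟩⟩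

lemma up_cond_right_iff (σ : {s : Finset V // s.card = a ∧ X s})
    (τ : {t : Finset W // t.card = b ∧ Y t}) (w : W) :
    ((embR w : Lex (V ⊕ W)) ∉ cU (σ.1.map embL) (τ.1.map embR) ∧
        joinK X Y (cIns (embR w : Lex (V ⊕ W)) (cU (σ.1.map embL) (τ.1.map embR))))
      ↔ (w ∉ τ.1 ∧ Y (cIns w τ.1)) := by
  rw [cIns_embR, embR_mem_iff, joinK_union_iff]
  exact ⟨fun ⟨h1, _, h2⟩ => ⟨h1, h2⟩, fun ⟨h1, h2⟩ => ⟨h1, σ.2.2, h2⟩⟩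

theorem up_core (F : Type*) [Field F] (h : a + b = c) (h1 : a + 1 + b = c + 1)
    (h2 : a + (b + 1) = c + 1)
    (σ : {s : Finset V // s.card = a ∧ X s}) (τ : {t : Finset W // t.card = b ∧ Y t}) :
    upC F (joinK X Y) c (Finsupp.single (ju2 h σ τ) 1) =
      jj F h1 (upC F X a (Finsupp.single σ 1)) (Finsupp.single τ 1)
        + ((-1 : F) ^ a) • jj F h2 (Finsupp.single σ 1) (upC F Y b (Finsupp.single τ 1)) := by
  simp only [upC, Finsupp.lsum_single, LinearMap.toSpanSingleton_apply, one_smul,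
    map_sum, LinearMap.sum_apply, Finset.smul_sum, ju2]
  simp only [insert_to_cIns]
  rw [← Equiv.sum_comp (toLex : V ⊕ W ≃ Lex (V ⊕ W)), Fintype.sum_sum_type]
  simp only [toLex_inl_eq, toLex_inr_eq]
  congr 1
  · apply Finset.sum_congr rfl
    intro v _
    by_cases hJ : (embL v : Lex (V ⊕ W)) ∉ cU (σ.1.map embL) (τ.1.map embR) ∧
        joinK X Y (cIns (embL v : Lex (V ⊕ W)) (cU (σ.1.map embL) (τ.1.map embR)))
    · erw [dif_pos hJ, dif_pos ((up_cond_left_iff σ τ v).mp hJ)]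
      rw [map_smul, LinearMap.smul_apply, jj_single]
      erw [filter_lt_embL]
      exact congrArg (fun z => ((-1 : F) ^ (σ.1.filter fun b => b < v).card) •
        Finsupp.single z (1 : F)) (Subtype.ext (cIns_embL v σ.1 τ.1))
    · erw [dif_neg hJ, dif_neg (fun hx => hJ ((up_cond_left_iff σ τ v).mpr hx))]
      simp
  · apply Finset.sum_congr rfl
    intro w _
    by_cases hJ : (embR w : Lex (V ⊕ W)) ∉ cU (σ.1.map embL) (τ.1.map embR) ∧
        joinK X Y (cIns (embR w : Lex (V ⊕ W)) (cU (σ.1.map embL) (τ.1.map embR)))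
    · erw [dif_pos hJ, dif_pos ((up_cond_right_iff σ τ w).mp hJ)]
      rw [map_smul (jj F h2 (Finsupp.single σ 1)), jj_single]
      erw [filter_lt_embR]
      rw [σ.2.1, pow_add, mul_smul]
      exact congrArg (fun z => ((-1 : F) ^ a) • ((-1 : F) ^ (τ.1.filter fun b => b < w).card) •
        Finsupp.single z (1 : F)) (Subtype.ext (cIns_embR w σ.1 τ.1))
    · erw [dif_neg hJ, dif_neg (fun hy => hJ ((up_cond_right_iff σ τ w).mpr hy))]
      simp

theorem down_core (F : Type*) [Field F]
    (hX : ∀ s t : Finset V, s ⊆ t → X t → X s) (hY : ∀ s t : Finset W, s ⊆ t → Y t → Y s)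
    (h : a + 1 + (b + 1) = c + 1) (h1 : a + (b + 1) = c) (h2 : a + 1 + b = c)
    (σ : {s : Finset V // s.card = a + 1 ∧ X s}) (τ : {t : Finset W // t.card = b + 1 ∧ Y t}) :
    downC F (joinK X Y) c (Finsupp.single (ju2 h σ τ) 1) =
      jj F h1 (downC F X a (Finsupp.single σ 1)) (Finsupp.single τ 1)
        + ((-1 : F) ^ (a + 1)) • jj F h2 (Finsupp.single σ 1) (downC F Y b (Finsupp.single τ 1)) := by
  have hU : (cU (σ.1.map embL) (τ.1.map embR)).card = c + 1 := (ju2 h σ τ).2.1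
  simp only [downC, Finsupp.lsum_single, LinearMap.toSpanSingleton_apply, one_smul,
    map_sum, LinearMap.sum_apply, Finset.smul_sum, ju2, erase_to_cErase]
  refine ((Finset.sum_congr rfl (fun x _ => ?_)).trans
      ((Finset.sum_attach (cU (σ.1.map embL) (τ.1.map embR)) (fun x =>
        if hx : x ∈ cU (σ.1.map embL) (τ.1.map embR) ∧
            joinK X Y (cErase (cU (σ.1.map embL) (τ.1.map embR)) x) then
          ((-1 : F) ^ ((cU (σ.1.map embL) (τ.1.map embR)).filter (fun b => b < x)).card) •
            Finsupp.single
              (⟨cErase (cU (σ.1.map embL) (τ.1.map embR)) x,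
                ⟨by rw [card_cErase hx.1, hU]; omega, hx.2⟩⟩ :
                {u : Finset (Lex (V ⊕ W)) // u.card = c ∧ joinK X Y u}) (1 : F)
        else 0)).trans ?_))
  · by_cases hK : joinK X Y (cErase (cU (σ.1.map embL) (τ.1.map embR)) ↑x)
    · rw [dif_pos hK, dif_pos ⟨x.2, hK⟩]
    · rw [dif_neg hK, dif_neg (fun hc => hK hc.2)]
  · rw [h_sum_cU (mapEmb_disjoint σ.1 τ.1), Finset.sum_map, Finset.sum_map,
      ← Finset.sum_attach σ.1, ← Finset.sum_attach τ.1]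
    congr 1
    · apply Finset.sum_congr rfl
      intro x _
      have hKL : joinK X Y (cErase (cU (σ.1.map embL) (τ.1.map embR)) (embL ↑x)) := by
        rw [cErase_embL]
        exact joinK_union_iff.mpr ⟨hX _ _ cErase_subset σ.2.2, τ.2.2⟩
      rw [dif_pos ⟨embL_mem_iff.mpr x.2, hKL⟩, dif_pos (hX _ _ cErase_subset σ.2.2),
        map_smul, LinearMap.smul_apply, jj_single, filter_lt_embL]
      exact congrArg (fun z => ((-1 : F) ^ (σ.1.filter fun b => b < ↑x).card) •
        Finsupp.single z (1 : F)) (Subtype.ext (cErase_embL ↑x σ.1 τ.1))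
    · apply Finset.sum_congr rfl
      intro x _
      have hKR : joinK X Y (cErase (cU (σ.1.map embL) (τ.1.map embR)) (embR ↑x)) := by
        rw [cErase_embR]
        exact joinK_union_iff.mpr ⟨σ.2.2, hY _ _ cErase_subset τ.2.2⟩
      have hcnt : ((-1 : F) ^ (σ.1.card + (τ.1.filter fun b => b < ↑x).card))
          = ((-1 : F) ^ (a + 1)) * (-1 : F) ^ ((τ.1.filter fun b => b < ↑x).card) := by
        rw [σ.2.1, pow_add]
      rw [dif_pos ⟨embR_mem_iff.mpr x.2, hKR⟩, dif_pos (hY _ _ cErase_subset τ.2.2),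
        map_smul (jj F h2 (Finsupp.single σ 1)), jj_single, filter_lt_embR, hcnt, mul_smul]
      exact congrArg (fun z => ((-1 : F) ^ (a + 1)) •
        ((-1 : F) ^ (τ.1.filter fun b => b < ↑x).card) • Finsupp.single z (1 : F))
        (Subtype.ext (cErase_embR ↑x σ.1 τ.1))

theorem up_all (F : Type*) [Field F] (h : a + b = c) (h1 : a + 1 + b = c + 1)
    (h2 : a + (b + 1) = c + 1) (v : Cc F X a) (w : Cc F Y b) :
    upC F (joinK X Y) c (jj F h v w) =
      jj F h1 (upC F X a v) w + ((-1 : F) ^ a) • jj F h2 v (upC F Y b w) := by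
  induction v using Finsupp.induction_linear with
  | zero => simp
  | add f g hf hg =>
      simp only [map_add, LinearMap.add_apply, hf, hg, smul_add]
      abel
  | single s xx =>
    induction w using Finsupp.induction_linear with
    | zero => simp
    | add f g hf hg =>
        simp only [map_add, hf, hg, smul_add]
        abel
    | single t yy =>
        have hxx : (Finsupp.single s xx : Cc F X a) = xx • Finsupp.single s 1 := by
          rw [Finsupp.smul_single, smul_eq_mul, mul_one]
        have hyy : (Finsupp.single t yy : Cc F Y b) = yy • Finsupp.single t 1 := by
          rw [Finsupp.smul_single, smul_eq_mul, mul_one]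
        rw [hxx, hyy]
        simp only [map_smul, LinearMap.smul_apply]
        rw [jj_single F h s t, up_core F h h1 h2 s t]
        module

theorem down_all (F : Type*) [Field F]
    (hX : ∀ s t : Finset V, s ⊆ t → X t → X s) (hY : ∀ s t : Finset W, s ⊆ t → Y t → Y s)
    (h : a + 1 + (b + 1) = c + 1) (h1 : a + (b + 1) = c) (h2 : a + 1 + b = c)
    (v : Cc F X (a + 1)) (w : Cc F Y (b + 1)) :
    downC F (joinK X Y) c (jj F h v w) =
      jj F h1 (downC F X a v) w + ((-1 : F) ^ (a + 1)) • jj F h2 v (downC F Y b w) := by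
  induction v using Finsupp.induction_linear with
  | zero => simp
  | add f g hf hg =>
      simp only [map_add, LinearMap.add_apply, hf, hg, smul_add]
      abel
  | single s xx =>
    induction w using Finsupp.induction_linear with
    | zero => simp
    | add f g hf hg =>
        simp only [map_add, hf, hg, smul_add]
        abel
    | single t yy =>
        have hxx : (Finsupp.single s xx : Cc F X (a + 1)) = xx • Finsupp.single s 1 := by
          rw [Finsupp.smul_single, smul_eq_mul, mul_one]
        have hyy : (Finsupp.single t yy : Cc F Y (b + 1)) = yy • Finsupp.single t 1 := by
          rw [Finsupp.smul_single, smul_eq_mul, mul_one]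
        rw [hxx, hyy]
        simp only [map_smul, LinearMap.smul_apply]
        rw [jj_single F h s t, down_core F hX hY h h1 h2 s t]
        module

lemma jright_eq (F : Type*) [Field F] (τ : {t : Finset W // t.card = b ∧ Y t})
    (v : Cc F X a) :
    Jright F τ v = jj F (rfl : a + b = a + b) v (Finsupp.single τ 1) := by
  induction v using Finsupp.induction_linear with
  | zero => simp
  | add f g hf hg => simp only [map_add, LinearMap.add_apply, hf, hg]
  | single s xx =>
      have hxx : (Finsupp.single s xx : Cc F X a) = xx • Finsupp.single s 1 := by
        rw [Finsupp.smul_single, smul_eq_mul, mul_one]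
      rw [hxx, map_smul, map_smul, LinearMap.smul_apply, jj_single]
      have h1 : Jright F τ (Finsupp.single s (1 : F)) = Finsupp.single (ju s τ) 1 := by
        simp [Jright, Finsupp.lsum_single, LinearMap.toSpanSingleton_apply]
      rw [h1]
      exact congrArg (fun z => xx • Finsupp.single z (1 : F))
        (Subtype.ext (union_to_cU _ _))

lemma jleft_eq (F : Type*) [Field F] (σ : {s : Finset V // s.card = a ∧ X s})
    (w : Cc F Y b) :
    Jleft F σ w = jj F (rfl : a + b = a + b) (Finsupp.single σ 1) w := by
  induction w using Finsupp.induction_linear with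
  | zero => simp
  | add f g hf hg => simp only [map_add, LinearMap.add_apply, hf, hg]
  | single t yy =>
      have hyy : (Finsupp.single t yy : Cc F Y b) = yy • Finsupp.single t 1 := by
        rw [Finsupp.smul_single, smul_eq_mul, mul_one]
      rw [hyy, map_smul, map_smul, jj_single]
      have h1 : Jleft F σ (Finsupp.single t (1 : F)) = Finsupp.single (ju σ t) 1 := by
        simp [Jleft, Finsupp.lsum_single, LinearMap.toSpanSingleton_apply]
      rw [h1]
      exact congrArg (fun z => yy • Finsupp.single z (1 : F))
        (Subtype.ext (union_to_cU _ _))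

end MyLapJoin
set_option linter.unusedSectionVars false

/-- The combinatorial Laplacian of the join of two simplicial complexes acts on a tensor
(join) basis face `σ ⊗ τ` (with `σ` an `i`-simplex of `X`, `τ` a `j`-simplex of `Y`, so
`σ ⊗ τ` is a `k`-simplex with `i + j = k − 1`) by
`Δ_k^{X∗Y}(σ ⊗ τ) = (Δ_i^X σ) ⊗ τ + σ ⊗ (Δ_j^Y τ)`.
(Cardinality indexing: `lapCard K c` is the Laplacian `Δ_{c−1}` on faces of cardinality `c`;
here `σ` has cardinality `i+1` and `τ` has cardinality `j+1`.) -/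
theorem lap_join_tensor
    {W : Type*} [Fintype W] [LinearOrder W]
    (X : Finset V → Prop) (Y : Finset W → Prop)
    (hX : ∀ s t : Finset V, s ⊆ t → X t → X s) (hX0 : X ∅)
    (hY : ∀ s t : Finset W, s ⊆ t → Y t → Y s) (hY0 : Y ∅)
    (i j : ℕ)
    (σ : {s : Finset V // s.card = i + 1 ∧ X s})
    (τ : {t : Finset W // t.card = j + 1 ∧ Y t}) :
    lapCard ℝ (joinK X Y) ((i + 1) + (j + 1)) (Finsupp.single (ju σ τ) 1) =
      Jright ℝ τ (lapCard ℝ X (i + 1) (Finsupp.single σ 1)) +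
        Jleft ℝ σ (lapCard ℝ Y (j + 1) (Finsupp.single τ 1)) := by
  have e0 : (i + 1) + (j + 1) = (i + 1) + j + 1 := rfl
  have eA : i + (j + 1) = (i + 1) + j := by omega
  have eA2 : i + (j + 1 + 1) = (i + 1) + j + 1 := by omega
  have eB1 : (i + 1 + 1) + j = (i + 1) + j + 1 := by omega
  have e0' : (i + 1 + 1) + (j + 1) = (i + 1) + j + 1 + 1 := by omega
  have e0'' : (i + 1) + (j + 1 + 1) = (i + 1) + j + 1 + 1 := rfl
  have hstart : Finsupp.single (ju σ τ) (1 : ℝ) = Finsupp.single (ju2 e0 σ τ) (1 : ℝ) :=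
    congrArg (fun z => Finsupp.single z (1 : ℝ)) (Subtype.ext (union_to_cU _ _))
  have hR1 : Jright ℝ τ (lapCard ℝ X (i + 1) (Finsupp.single σ 1))
      = jj ℝ e0 (upC ℝ X i (downC ℝ X i (Finsupp.single σ 1))
          + downC ℝ X (i + 1) (upC ℝ X (i + 1) (Finsupp.single σ 1))) (Finsupp.single τ 1) :=
    jright_eq ℝ τ _
  have hR2 : Jleft ℝ σ (lapCard ℝ Y (j + 1) (Finsupp.single τ 1))
      = jj ℝ e0 (Finsupp.single σ 1)
          (upC ℝ Y j (downC ℝ Y j (Finsupp.single τ 1))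
            + downC ℝ Y (j + 1) (upC ℝ Y (j + 1) (Finsupp.single τ 1))) :=
    jleft_eq ℝ σ _
  rw [hR1, hR2, map_add, LinearMap.add_apply, map_add]
  rw [show lapCard ℝ (joinK X Y) ((i + 1) + (j + 1)) (Finsupp.single (ju σ τ) 1)
      = upC ℝ (joinK X Y) ((i + 1) + j)
          (downC ℝ (joinK X Y) ((i + 1) + j) (Finsupp.single (ju2 e0 σ τ) 1))
        + downC ℝ (joinK X Y) ((i + 1) + j + 1)
          (upC ℝ (joinK X Y) ((i + 1) + j + 1) (Finsupp.single (ju2 e0 σ τ) 1))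
      from by rw [hstart]; rfl]
  rw [down_core ℝ hX hY e0 eA rfl σ τ, up_core ℝ e0 e0' e0'' σ τ]
  rw [map_add, map_add, map_smul, map_smul]
  rw [up_all ℝ eA e0 eA2 _ _, up_all ℝ rfl eB1 e0 _ _,
    down_all ℝ hX hY e0' e0 eB1 _ _, down_all ℝ hX hY e0'' eA2 e0 _ _]
  rw [smul_add, smul_add, smul_smul, smul_smul, ← pow_add,
    show ((-1 : ℝ)) ^ ((i + 1) + (i + 1)) = 1 from Even.neg_one_pow ⟨i + 1, rfl⟩,
    one_smul, one_smul]
  module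
end

section
/- The smallest nonzero eigenvalue (spectral gap) of the combinatorial Laplacian Δ_{k−1} of the clique complex of K(m,k) is m; in fact its spectrum (ignoring multiplicity) is contained in {0, m, 2m, ..., km}. -/
open Finsupp

attribute [local instance] Classical.propDecidable

variable (F : Type*) [Field F]
variable {V : Type*} [Fintype V] [LinearOrder V]

/-- The complete `k`-partite graph `K(m,k)`: `k` clusters of `m` vertices each (with a
linear order on the vertices), two vertices adjacent iff they lie in different clusters. -/
def KmkGraph (m k : ℕ) : SimpleGraph (Lex (Fin k × Fin m)) where
  Adj v w := (ofLex v).1 ≠ (ofLex w).1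
  symm := ⟨fun v w h => h.symm⟩
  loopless := ⟨fun v h => h rfl⟩

namespace KmkAux

attribute [local instance 2000] Classical.propDecidable

open Finset Function

variable {m k : ℕ}

abbrev VL (m k : ℕ) := Lex (Fin k × Fin m)

abbrev KK (m k : ℕ) : Finset (VL m k) → Prop := fun s => (KmkGraph m k).IsClique ↑s

noncomputable def kface (g : Fin k → Fin m) : Finset (VL m k) :=
  Finset.univ.image fun i => toLex (i, g i)

lemma toLexg_inj (g : Fin k → Fin m) :
    Function.Injective (fun i : Fin k => (toLex (i, g i) : VL m k)) := by
  intro i j h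
  have := congrArg (fun c : VL m k => (ofLex c).1) h
  simpa using this

lemma kface_card (g : Fin k → Fin m) : (kface g).card = k := by
  rw [kface, Finset.card_image_of_injective _ (toLexg_inj g), Finset.card_univ,
    Fintype.card_fin]

lemma toLex_eq_self {c : VL m k} : toLex ((ofLex c).1, (ofLex c).2) = c := rfl

lemma mem_kface {g : Fin k → Fin m} {c : VL m k} :
    c ∈ kface g ↔ g (ofLex c).1 = (ofLex c).2 := by
  simp only [kface, Finset.mem_image, Finset.mem_univ, true_and]
  constructor
  · rintro ⟨i, rfl⟩; simp
  · intro h; exact ⟨(ofLex c).1, by rw [h]; rfl⟩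

lemma kface_clique (g : Fin k → Fin m) : KK m k (kface g) := by
  intro a ha b hb hne
  rw [Finset.mem_coe, mem_kface] at ha hb
  show (ofLex a).1 ≠ (ofLex b).1
  intro h1
  apply hne
  have h2 : (ofLex a).2 = (ofLex b).2 := by rw [← ha, ← hb, h1]
  rw [← toLex_eq_self (c := a), ← toLex_eq_self (c := b), h1, h2]

lemma kface_injective : Function.Injective (kface (m := m) (k := k)) := by
  intro g g' h
  funext i
  have h1 : (toLex (i, g i) : VL m k) ∈ kface g := by rw [mem_kface]; simp
  rw [h, mem_kface] at h1
  simpa using h1.symm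

lemma clique_fst_injOn {s : Finset (VL m k)} (hK : KK m k s) :
    Set.InjOn (fun c : VL m k => (ofLex c).1) ↑s := by
  intro a ha b hb h
  by_contra hne
  exact (hK ha hb hne) h

lemma clique_eq_kface {s : Finset (VL m k)} (hcard : s.card = k) (hK : KK m k s) :
    ∃ g : Fin k → Fin m, s = kface g := by
  have himg : s.image (fun c : VL m k => (ofLex c).1) = Finset.univ := by
    apply Finset.eq_univ_of_card
    rw [Finset.card_image_of_injOn (clique_fst_injOn hK), hcard, Fintype.card_fin]
  have hex : ∀ i : Fin k, ∃ c, c ∈ s ∧ (ofLex c).1 = i := by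
    intro i
    have : i ∈ s.image (fun c : VL m k => (ofLex c).1) := by rw [himg]; exact Finset.mem_univ i
    simpa [Finset.mem_image] using this
  choose f hf1 hf2 using hex
  refine ⟨fun i => (ofLex (f i)).2, ?_⟩
  have hsub : kface (fun i => (ofLex (f i)).2) ⊆ s := by
    intro c hc
    simp only [kface, Finset.mem_image, Finset.mem_univ, true_and] at hc
    obtain ⟨i, rfl⟩ := hc
    have h3 := toLex_eq_self (c := f i)
    rw [hf2 i] at h3
    rw [h3]
    exact hf1 i
  have := Finset.eq_of_subset_of_card_le hsub (by rw [hcard, kface_card])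
  exact this.symm

noncomputable def gOf (s : {s : Finset (VL m k) // s.card = k ∧ KK m k s}) : Fin k → Fin m :=
  (clique_eq_kface s.2.1 s.2.2).choose

lemma kface_gOf (s : {s : Finset (VL m k) // s.card = k ∧ KK m k s}) :
    kface (gOf s) = s.1 :=
  (clique_eq_kface s.2.1 s.2.2).choose_spec.symm

noncomputable def fce (g : Fin k → Fin m) : {s : Finset (VL m k) // s.card = k ∧ KK m k s} :=
  ⟨kface g, kface_card g, kface_clique g⟩

lemma gOf_fce (g : Fin k → Fin m) : gOf (fce g) = g :=
  kface_injective (kface_gOf (fce g))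

lemma fce_gOf (s : {s : Finset (VL m k) // s.card = k ∧ KK m k s}) : fce (gOf s) = s :=
  Subtype.ext (kface_gOf s)

lemma fce_injective : Function.Injective (fce (m := m) (k := k)) := fun g g' h =>
  kface_injective (congrArg Subtype.val h)

end KmkAux
namespace KmkAux

attribute [local instance 2000] Classical.propDecidable

variable {m k : ℕ}

lemma eq_toLex_iff {c : VL m k} {p : Fin k × Fin m} :
    c = toLex p ↔ (ofLex c).1 = p.1 ∧ (ofLex c).2 = p.2 := by
  constructor
  · rintro rfl; exact ⟨rfl, rfl⟩
  · rintro ⟨h1, h2⟩; rw [← toLex_eq_self (c := c), h1, h2]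

lemma mem_erase_kface {g : Fin k → Fin m} {i : Fin k} {c : VL m k} :
    c ∈ (kface g).erase (toLex (i, g i)) ↔
      (ofLex c).1 ≠ i ∧ g (ofLex c).1 = (ofLex c).2 := by
  rw [Finset.mem_erase, mem_kface]
  constructor
  · rintro ⟨hne, hg⟩
    refine ⟨fun h1 => hne ?_, hg⟩
    rw [eq_toLex_iff]
    exact ⟨h1, by rw [← hg, h1]⟩
  · rintro ⟨h1, hg⟩
    refine ⟨fun h2 => h1 ?_, hg⟩
    rw [h2]; rfl

lemma erase_kface_eq {g : Fin k → Fin m} {i : Fin k} :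
    (kface g).erase (toLex (i, g i)) = (Finset.univ.erase i).image fun j => toLex (j, g j) := by
  ext c
  rw [mem_erase_kface]
  simp only [Finset.mem_image, Finset.mem_erase, Finset.mem_univ, and_true]
  constructor
  · rintro ⟨h1, h2⟩
    exact ⟨(ofLex c).1, h1, by rw [h2]; exact toLex_eq_self⟩
  · rintro ⟨j, hj, rfl⟩
    exact ⟨by simpa using hj, by simp⟩

lemma insert_erase_kface {g : Fin k → Fin m} {i : Fin k} {x : Fin m} :
    insert (toLex (i, x)) ((kface g).erase (toLex (i, g i)))
      = kface (Function.update g i x) := by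
  ext c
  rw [Finset.mem_insert, mem_erase_kface, mem_kface, eq_toLex_iff]
  by_cases h : (ofLex c).1 = i
  · rw [h, Function.update_self]
    constructor
    · rintro (⟨-, h2⟩ | ⟨h2, -⟩)
      · rw [h2]
      · exact absurd rfl h2
    · intro h2
      exact Or.inl ⟨rfl, h2.symm⟩
  · simp [h, Function.update_of_ne h]

lemma filter_univ_lt_card (i : Fin k) :
    (Finset.univ.filter fun j : Fin k => j < i).card = (i : ℕ) := by
  have : (Finset.univ.filter fun j : Fin k => j < i) = Finset.Iio i := by ext j; simp
  rw [this, Fin.card_Iio]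

lemma filter_lt_card (g : Fin k → Fin m) (i : Fin k) :
    ((kface g).filter fun c => c < toLex (i, g i)).card = (i : ℕ) := by
  have himg : ((kface g).filter fun c => c < toLex (i, g i))
      = ((Finset.univ.filter fun j : Fin k => j < i).image fun j => toLex (j, g j)) := by
    rw [kface, Finset.filter_image]
    congr 1
    apply Finset.filter_congr
    intro j _
    rw [Prod.Lex.lt_iff]
    constructor
    · rintro (h | ⟨rfl, h⟩)
      · exact h
      · exact absurd h (lt_irrefl _)
    · exact Or.inl
  rw [himg, Finset.card_image_of_injective _ (toLexg_inj g), filter_univ_lt_card]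

lemma filter_lt_card' (g : Fin k → Fin m) (i : Fin k) (y : Fin m) :
    (((kface g).erase (toLex (i, g i))).filter fun c => c < toLex (i, y)).card = (i : ℕ) := by
  rw [erase_kface_eq, Finset.filter_image]
  have h1 : ((Finset.univ.erase i).filter fun j : Fin k => (toLex (j, g j) : VL m k) < toLex (i, y))
      = (Finset.univ.filter fun j : Fin k => j < i) := by
    rw [Finset.filter_erase]
    have h2 : (Finset.univ.filter fun j : Fin k => (toLex (j, g j) : VL m k) < toLex (i, y))
        = (Finset.univ.filter fun j : Fin k => j < i ∨ (j = i ∧ g j < y)) := by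
      apply Finset.filter_congr
      intro j _
      exact Prod.Lex.lt_iff
    rw [h2]
    ext j
    simp only [Finset.mem_erase, Finset.mem_filter, Finset.mem_univ, true_and]
    constructor
    · rintro ⟨hne, (h | ⟨rfl, h⟩)⟩
      · exact h
      · exact absurd rfl hne
    · intro h
      exact ⟨ne_of_lt h, Or.inl h⟩
  rw [h1, Finset.card_image_of_injective _ (toLexg_inj g), filter_univ_lt_card]

lemma filter_lt_card2 (g : Fin k → Fin m) (i : Fin k)
    (p : VL m k → Prop) [DecidablePred p] (hp : ∀ c, p c ↔ c < toLex (i, g i)) :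
    ((kface g).filter p).card = (i : ℕ) := by
  rw [Finset.filter_congr (fun c _ => hp c)]
  exact filter_lt_card g i

lemma filter_lt_card2' (g : Fin k → Fin m) (i : Fin k) (y : Fin m)
    (p : VL m k → Prop) [DecidablePred p] (hp : ∀ c, p c ↔ c < toLex (i, y)) :
    (((kface g).erase (toLex (i, g i))).filter p).card = (i : ℕ) := by
  rw [Finset.filter_congr (fun c _ => hp c)]
  exact filter_lt_card' g i y

end KmkAux
namespace KmkAux

attribute [local instance 2000] Classical.propDecidable

variable {m k : ℕ}

@[simp] lemma fce_val (g : Fin k → Fin m) : (fce g).1 = kface g := rfl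

/-- The condition for inserting a vertex into an erased top face. -/
lemma cond_iff (g : Fin k → Fin m) (i : Fin k) (b : VL m k) :
    (b ∉ (kface g).erase (toLex (i, g i)) ∧
        KK m k (insert b ((kface g).erase (toLex (i, g i))))) ↔ (ofLex b).1 = i := by
  constructor
  · rintro ⟨hnm, hcl⟩
    by_contra hne
    have hc : (toLex ((ofLex b).1, g (ofLex b).1) : VL m k)
        ∈ (kface g).erase (toLex (i, g i)) := mem_erase_kface.mpr ⟨by simpa using hne, by simp⟩
    have hbc : b ≠ toLex ((ofLex b).1, g (ofLex b).1) := fun h => hnm (h ▸ hc)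
    have hadj := hcl (Finset.mem_coe.mpr (Finset.mem_insert_self _ _))
      (Finset.mem_coe.mpr (Finset.mem_insert_of_mem hc)) hbc
    exact hadj rfl
  · intro hb
    have hbeq : b = toLex (i, (ofLex b).2) := eq_toLex_iff.mpr ⟨hb, rfl⟩
    constructor
    · intro hmem
      exact (mem_erase_kface.mp hmem).1 hb
    · rw [hbeq, insert_erase_kface]
      exact kface_clique _

lemma erase_kface_clique (g : Fin k → Fin m) (a : VL m k) :
    KK m k ((kface g).erase a) :=
  (kface_clique g).subset (Finset.coe_subset.mpr (Finset.erase_subset _ _))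

lemma smul_single_eq {α : Type*} (N i : ℕ) (hN : N = i)
    (t t' : α) (ht : t = t') (c : ℝ) (hc : c = (-1:ℝ)^N) :
    ((-1:ℝ)^i) • c • (Finsupp.single t (1:ℝ)) = Finsupp.single t' 1 := by
  subst hN ht hc
  rw [smul_smul, ← pow_add, Even.neg_one_pow ⟨N, rfl⟩, one_smul]

lemma key_step (m d : ℕ) (g : Fin (d+1) → Fin m) (i : Fin (d+1))
    (p : VL m (d+1) → Prop) [DecidablePred p] (hp : ∀ c, p c ↔ c < toLex (i, g i))
    (h1 : ((kface g).erase (toLex (i, g i))).card = d)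
    (h2 : KK m (d+1) ((kface g).erase (toLex (i, g i)))) :
    upC ℝ (KK m (d+1)) d
      (((-1:ℝ) ^ ((kface g).filter p).card) •
        Finsupp.single
          (⟨(kface g).erase (toLex (i, g i)), h1, h2⟩ :
            {s : Finset (VL m (d+1)) // s.card = d ∧ KK m (d+1) s}) (1:ℝ))
      = ∑ x : Fin m, Finsupp.single (fce (Function.update g i x)) (1:ℝ) := by
  rw [map_smul, filter_lt_card2 g i p hp]
  rw [upC, Finsupp.lsum_single, LinearMap.toSpanSingleton_apply, one_smul]
  dsimp only
  have hre : ∀ (f : VL m (d+1) → Cc ℝ (KK m (d+1)) (d+1)),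
      (∑ b : VL m (d+1), f b) = ∑ j : Fin (d+1), ∑ x : Fin m, f (toLex (j, x)) := by
    intro f
    calc (∑ b : VL m (d+1), f b) = ∑ p : Fin (d+1) × Fin m, f (toLex p) :=
          (Fintype.sum_equiv toLex (fun p => f (toLex p)) f (fun p => rfl)).symm
      _ = ∑ j : Fin (d+1), ∑ x : Fin m, f (toLex (j, x)) :=
          Fintype.sum_prod_type (fun p => f (toLex p))
  rw [hre]
  rw [Finset.sum_eq_single_of_mem i (Finset.mem_univ i) ?hzero]
  case hzero =>
    intro j _ hj
    apply Finset.sum_eq_zero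
    intro x _
    apply dif_neg
    intro hc
    exact hj ((cond_iff g i (toLex (j, x))).mp hc)
  rw [Finset.smul_sum]
  apply Finset.sum_congr rfl
  intro x _
  have hcond := (cond_iff g i (toLex (i, x))).mpr rfl
  split
  case isFalse h => exact absurd hcond h
  case isTrue h =>
    exact smul_single_eq _ _ (filter_lt_card2' g i x _ (fun c => Iff.rfl)) _ _
      (Subtype.ext insert_erase_kface) _ rfl

lemma key_step' (m d : ℕ) (g : Fin (d+1) → Fin m) (i : Fin (d+1)) (a : VL m (d+1))
    (ha : a = toLex (i, g i))
    (p : VL m (d+1) → Prop) [DecidablePred p] (hp : ∀ c, p c ↔ c < a)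
    (h1 : ((kface g).erase a).card = d)
    (h2 : KK m (d+1) ((kface g).erase a)) :
    upC ℝ (KK m (d+1)) d
      (((-1:ℝ) ^ ((kface g).filter p).card) •
        Finsupp.single
          (⟨(kface g).erase a, h1, h2⟩ :
            {s : Finset (VL m (d+1)) // s.card = d ∧ KK m (d+1) s}) (1:ℝ))
      = ∑ x : Fin m, Finsupp.single (fce (Function.update g i x)) (1:ℝ) := by
  subst ha
  exact key_step m d g i p hp h1 h2

end KmkAux
namespace KmkAux

attribute [local instance 2000] Classical.propDecidable

variable {m k : ℕ}

lemma upC_top_zero (m d : ℕ) : upC ℝ (KK m (d+1)) (d+1) = 0 := by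
  apply Finsupp.lhom_ext
  intro t b
  rw [upC, Finsupp.lsum_single, LinearMap.toSpanSingleton_apply, LinearMap.zero_apply]
  have hz : ∀ a : VL m (d+1), ¬ (a ∉ t.1 ∧ KK m (d+1) (insert a t.1)) := by
    rintro a ⟨ha, hK⟩
    have hcard : (Finset.univ : Finset (Fin (d+1))).card < (insert a t.1).card := by
      rw [Finset.card_insert_of_notMem ha, t.2.1, Finset.card_univ, Fintype.card_fin]
      exact Nat.lt_succ_self _
    obtain ⟨x, hx, y, hy, hxy, hfxy⟩ := Finset.exists_ne_map_eq_of_card_lt_of_maps_to hcard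
      (fun c _ => Finset.mem_univ ((ofLex c).1))
    exact (hK hx hy hxy) hfxy
  refine (smul_eq_zero).mpr (Or.inr (Finset.sum_eq_zero fun a _ => dif_neg (hz a)))

lemma down_up_single (m d : ℕ)
    (s : {s : Finset (VL m (d+1)) // s.card = d + 1 ∧ KK m (d+1) s}) :
    upC ℝ (KK m (d+1)) d (downC ℝ (KK m (d+1)) d (Finsupp.single s (1:ℝ)))
      = ∑ i : Fin (d+1), ∑ x : Fin m,
          Finsupp.single (fce (Function.update (gOf s) i x)) (1:ℝ) := by
  obtain ⟨g, rfl⟩ : ∃ g, fce g = s := ⟨gOf s, fce_gOf s⟩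
  rw [gOf_fce]
  rw [downC, Finsupp.lsum_single, LinearMap.toSpanSingleton_apply, one_smul]
  dsimp only [fce_val]
  rw [map_sum]
  refine Finset.sum_nbij' (i := fun a => (ofLex a.1).1)
    (j := fun i => ⟨toLex (i, g i), mem_kface.mpr rfl⟩)
    (fun a _ => Finset.mem_univ _) (fun i _ => Finset.mem_attach _ _) ?_ ?_ ?_
  · intro a _
    apply Subtype.ext
    symm
    rw [eq_toLex_iff]
    exact ⟨rfl, (mem_kface.mp a.2).symm⟩
  · intro i _
    rfl
  · intro a _
    have ha : (a.1 : VL m (d+1)) = toLex ((ofLex a.1).1, g (ofLex a.1).1) := by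
      rw [eq_toLex_iff]
      exact ⟨rfl, (mem_kface.mp a.2).symm⟩
    refine (congrArg (upC ℝ (KK m (d+1)) d) (dif_pos (erase_kface_clique g _))).trans ?_
    exact key_step' m d g _ _ ha _ (fun c => Iff.rfl)
      (by rw [Finset.card_erase_of_mem a.2, kface_card]; exact Nat.add_sub_cancel d 1) (erase_kface_clique g _)

noncomputable def Top (m k : ℕ) (i : Fin k) :
    Cc ℝ (KK m k) k →ₗ[ℝ] Cc ℝ (KK m k) k :=
  Finsupp.lsum ℝ fun s => LinearMap.toSpanSingleton ℝ _
    (∑ x : Fin m, Finsupp.single (fce (Function.update (gOf s) i x)) (1:ℝ))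

lemma Top_single (i : Fin k) (s : {s : Finset (VL m k) // s.card = k ∧ KK m k s}) (b : ℝ) :
    Top m k i (Finsupp.single s b)
      = b • ∑ x : Fin m, Finsupp.single (fce (Function.update (gOf s) i x)) (1:ℝ) := by
  rw [Top, Finsupp.lsum_single, LinearMap.toSpanSingleton_apply]

lemma lap_eq (m d : ℕ) :
    lapCard ℝ (KK m (d+1)) (d+1) = ∑ i : Fin (d+1), Top m (d+1) i := by
  apply Finsupp.lhom_ext
  intro s b
  have h2 : lapCard ℝ (KK m (d+1)) (d+1)
      = upC ℝ (KK m (d+1)) d ∘ₗ downC ℝ (KK m (d+1)) d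
        + downC ℝ (KK m (d+1)) (d+1) ∘ₗ upC ℝ (KK m (d+1)) (d+1) := rfl
  rw [h2, upC_top_zero m d, LinearMap.comp_zero, add_zero, LinearMap.comp_apply]
  have hb : Finsupp.single s b = b • Finsupp.single s (1:ℝ) := by
    rw [Finsupp.smul_single', mul_one]
  rw [hb, map_smul, map_smul, map_smul, down_up_single m d s]
  congr 1
  refine Eq.trans ?_ (LinearMap.sum_apply Finset.univ (fun i => Top m (d+1) i)
    (Finsupp.single s (1:ℝ))).symm
  refine Finset.sum_congr rfl fun i _ => ?_
  rw [Top_single, one_smul]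

end KmkAux
namespace KmkAux

attribute [local instance 2000] Classical.propDecidable

variable {m k : ℕ}

lemma Top_Top (i j : Fin k) (s : {s : Finset (VL m k) // s.card = k ∧ KK m k s}) (b : ℝ) :
    Top m k i (Top m k j (Finsupp.single s b))
      = b • ∑ y : Fin m, ∑ x : Fin m,
          Finsupp.single (fce (Function.update (Function.update (gOf s) j y) i x)) (1:ℝ) := by
  rw [Top_single, map_smul, map_sum]
  congr 1
  refine Finset.sum_congr rfl fun y _ => ?_
  rw [Top_single, one_smul, gOf_fce]

lemma Top_comm (i j : Fin k) :
    Top m k i ∘ₗ Top m k j = Top m k j ∘ₗ Top m k i := by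
  rcases eq_or_ne i j with rfl | hij
  · rfl
  apply Finsupp.lhom_ext
  intro s b
  simp only [LinearMap.comp_apply]
  rw [Top_Top, Top_Top]
  congr 1
  rw [Finset.sum_comm]
  refine Finset.sum_congr rfl fun x _ => Finset.sum_congr rfl fun y _ => ?_
  rw [Function.update_comm hij.symm]

lemma Top_idem (i : Fin k) :
    Top m k i ∘ₗ Top m k i = (m:ℝ) • Top m k i := by
  apply Finsupp.lhom_ext
  intro s b
  simp only [LinearMap.comp_apply, LinearMap.smul_apply]
  rw [Top_Top, Top_single]
  have hupd : ∀ y : Fin m,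
      (∑ x : Fin m, Finsupp.single
        (fce (Function.update (Function.update (gOf s) i y) i x)) (1:ℝ))
      = ∑ x : Fin m, Finsupp.single (fce (Function.update (gOf s) i x)) (1:ℝ) := fun y =>
    Finset.sum_congr rfl fun x _ => by rw [Function.update_idem]
  rw [Finset.sum_congr rfl (fun y _ => hupd y), Finset.sum_const, Finset.card_univ,
    Fintype.card_fin, ← Nat.cast_smul_eq_nsmul ℝ m, smul_comm]

lemma split_prod {R : Type*} [CommRing R] {p : R} (hp : p * p = p) (n : ℕ) (f g : ℕ → R) :
    ∏ j ∈ Finset.range n, ((1 - p) * f j + p * g j)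
      = (1 - p) * ∏ j ∈ Finset.range n, f j + p * ∏ j ∈ Finset.range n, g j := by
  induction n with
  | zero => simp only [Finset.range_zero, Finset.prod_empty]; ring
  | succ n ih =>
    rw [Finset.prod_range_succ, Finset.prod_range_succ, Finset.prod_range_succ, ih]
    linear_combination ((∏ j ∈ Finset.range n, f j) * f n - (∏ j ∈ Finset.range n, f j) * g n
      - (∏ j ∈ Finset.range n, g j) * f n + (∏ j ∈ Finset.range n, g j) * g n) * hp

lemma sum_idem_ann {R ι : Type*} [CommRing R] [DecidableEq ι] (A : Finset ι) (P : ι → R)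
    (hP : ∀ i ∈ A, P i * P i = P i) :
    ∏ j ∈ Finset.range (A.card + 1), ((∑ i ∈ A, P i) - (j : R)) = 0 := by
  induction A using Finset.induction_on with
  | empty => simp
  | @insert a A' ha ih =>
    have hp : P a * P a = P a := hP a (Finset.mem_insert_self a A')
    have ih' := ih (fun i hi => hP i (Finset.mem_insert_of_mem hi))
    rw [Finset.sum_insert ha, Finset.card_insert_of_notMem ha]
    have hfac : ∀ j : ℕ, P a + (∑ i ∈ A', P i) - (j:R)
        = (1 - P a) * ((∑ i ∈ A', P i) - (j:R))
          + P a * (((∑ i ∈ A', P i) + 1) - (j:R)) := by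
      intro j; ring
    rw [Finset.prod_congr rfl (fun j _ => hfac j), split_prod hp]
    have h1 : ∏ j ∈ Finset.range (A'.card + 1 + 1), ((∑ i ∈ A', P i) - (j:R)) = 0 := by
      rw [Finset.prod_range_succ, ih', zero_mul]
    have h2 : ∏ j ∈ Finset.range (A'.card + 1 + 1), (((∑ i ∈ A', P i) + 1) - (j:R)) = 0 := by
      rw [Finset.prod_range_succ']
      have hc : ∀ j : ℕ, ((∑ i ∈ A', P i) + 1) - ((j+1 : ℕ):R) = (∑ i ∈ A', P i) - (j:R) := by
        intro j; push_cast; ring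
      rw [Finset.prod_congr rfl (fun j _ => hc j), ih', zero_mul]
    rw [h1, h2, mul_zero, mul_zero, add_zero]

lemma prod_range_eq_list {Mo : Type*} [CommMonoid Mo] (f : ℕ → Mo) (n : ℕ) :
    ((List.range n).map f).prod = ∏ j ∈ Finset.range n, f j := by
  induction n with
  | zero => simp
  | succ n ih =>
    rw [List.range_succ, List.map_append, List.prod_append, Finset.prod_range_succ, ih]
    simp

set_option synthInstance.maxHeartbeats 1000000 in
lemma end_ann {M : Type*} [AddCommGroup M] [Module ℝ M] {n : ℕ} (P : Fin n → Module.End ℝ M)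
    (hP : ∀ i, P i * P i = P i) (hC : ∀ i j, P i * P j = P j * P i) :
    ((List.range (n+1)).map (fun (j : ℕ) => (∑ i, P i) - (j : Module.End ℝ M))).prod = 0 := by
  have hcomm : ∀ a ∈ Set.range P, ∀ b ∈ Set.range P, a * b = b * a := by
    rintro a ⟨i, rfl⟩ b ⟨j, rfl⟩; exact hC i j
  letI : CommRing (Algebra.adjoin ℝ (Set.range P)) := Algebra.adjoinCommRingOfComm ℝ hcomm
  set P' : Fin n → Algebra.adjoin ℝ (Set.range P) :=
    fun i => ⟨P i, Algebra.subset_adjoin ⟨i, rfl⟩⟩ with hP'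
  have h := sum_idem_ann (Finset.univ : Finset (Fin n)) P'
    (fun i _ => Subtype.ext (hP i))
  rw [Finset.card_univ, Fintype.card_fin, ← prod_range_eq_list] at h
  have h2 := congrArg ((Algebra.adjoin ℝ (Set.range P)).val) h
  rw [map_list_prod, List.map_map, map_zero] at h2
  refine Eq.trans (congrArg List.prod ?_) h2
  refine List.map_congr_left fun j _ => ?_
  rw [Function.comp_apply, map_sub, map_sum, map_natCast]
  congr 1

lemma list_factor_apply {M : Type*} [AddCommGroup M] [Module ℝ M]
    (f : Module.End ℝ M) (v : M) (c : ℝ) (hv : f v = c • v) (n : ℕ) :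
    (((List.range n).map (fun (j : ℕ) => f - (j : Module.End ℝ M))).prod) v
      = (∏ j ∈ Finset.range n, (c - (j:ℝ))) • v := by
  induction n with
  | zero => simp
  | succ n ih =>
    rw [List.range_succ, List.map_append, List.prod_append, List.map_singleton,
      List.prod_singleton, Finset.prod_range_succ, Module.End.mul_apply]
    have h1 : (f - (n : Module.End ℝ M)) v = (c - (n:ℝ)) • v := by
      rw [LinearMap.sub_apply, hv, Module.End.natCast_apply, sub_smul,
        Nat.cast_smul_eq_nsmul]
    rw [h1, map_smul, ih, smul_smul, mul_comm]

lemma main_ann (m d : ℕ) (hm : (m:ℝ) ≠ 0) {μ : ℝ}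
    (hμ : Module.End.HasEigenvalue (lapCard ℝ (KK m (d+1)) (d+1)) μ) :
    ∃ j : ℕ, j ≤ d + 1 ∧ μ = j * m := by
  obtain ⟨v, hv⟩ := hμ.exists_hasEigenvector
  have hv0 : v ≠ 0 := hv.2
  have happ : lapCard ℝ (KK m (d+1)) (d+1) v = μ • v := hv.apply_eq_smul
  set P : Fin (d+1) → Module.End ℝ (Cc ℝ (KK m (d+1)) (d+1)) :=
    fun i => (m:ℝ)⁻¹ • Top m (d+1) i with hPdef
  have hidem : ∀ i, P i * P i = P i := by
    intro i
    simp only [hPdef]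
    rw [smul_mul_smul_comm, Module.End.mul_eq_comp, Top_idem, smul_smul]
    congr 1
    field_simp
  have hcomm : ∀ i j, P i * P j = P j * P i := by
    intro i j
    simp only [hPdef]
    rw [smul_mul_smul_comm, smul_mul_smul_comm, Module.End.mul_eq_comp,
      Module.End.mul_eq_comp, Top_comm, mul_comm ((m:ℝ)⁻¹)]
  have hann := end_ann P hidem hcomm
  have hS : (∑ i, P i) v = ((m:ℝ)⁻¹ * μ) • v := by
    simp only [hPdef]
    rw [← Finset.smul_sum, LinearMap.smul_apply, ← lap_eq m d, happ, smul_smul]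
  have h0 := list_factor_apply (∑ i, P i) v ((m:ℝ)⁻¹ * μ) hS (d+1+1)
  rw [hann, LinearMap.zero_apply] at h0
  have hprod : (∏ j ∈ Finset.range (d+1+1), ((m:ℝ)⁻¹ * μ - (j:ℝ))) = 0 := by
    rcases smul_eq_zero.mp h0.symm with h | h
    · exact h
    · exact absurd h hv0
  obtain ⟨j, hjmem, hj⟩ := Finset.prod_eq_zero_iff.mp hprod
  refine ⟨j, Nat.lt_succ_iff.mp (Finset.mem_range.mp hjmem), ?_⟩
  have hins : (m:ℝ)⁻¹ * μ = j := sub_eq_zero.mp hj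
  field_simp at hins
  linarith

end KmkAux
namespace KmkAux

attribute [local instance 2000] Classical.propDecidable

noncomputable def wv (m : ℕ) (hm : 2 ≤ m) (x : Fin m) : ℝ :=
  (if x = (⟨0, Nat.lt_of_lt_of_le Nat.zero_lt_two hm⟩ : Fin m) then 1 else 0)
    + (if x = (⟨1, Nat.lt_of_lt_of_le Nat.one_lt_two hm⟩ : Fin m) then -1 else 0)

lemma sum_wv (m : ℕ) (hm : 2 ≤ m) : ∑ x : Fin m, wv m hm x = 0 := by
  simp only [wv]
  rw [Finset.sum_add_distrib,
    Finset.sum_ite_eq' Finset.univ (⟨0, Nat.lt_of_lt_of_le Nat.zero_lt_two hm⟩ : Fin m) (fun _ => (1:ℝ)),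
    Finset.sum_ite_eq' Finset.univ (⟨1, Nat.lt_of_lt_of_le Nat.one_lt_two hm⟩ : Fin m) (fun _ => (-1:ℝ))]
  simp

lemma wv_zero (m : ℕ) (hm : 2 ≤ m) :
    wv m hm ⟨0, Nat.lt_of_lt_of_le Nat.zero_lt_two hm⟩ = 1 := by
  have h01 : (⟨0, Nat.lt_of_lt_of_le Nat.zero_lt_two hm⟩ : Fin m)
      ≠ ⟨1, Nat.lt_of_lt_of_le Nat.one_lt_two hm⟩ :=
    fun hh => Nat.zero_ne_one (congrArg Fin.val hh)
  simp [wv, h01]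

noncomputable def cg (m d : ℕ) (hm : 2 ≤ m) (g : Fin (d+1) → Fin m) : ℝ :=
  ∏ i ∈ Finset.univ.erase (⟨0, Nat.succ_pos d⟩ : Fin (d+1)), wv m hm (g i)

noncomputable def vEig (m d : ℕ) (hm : 2 ≤ m) : Cc ℝ (KK m (d+1)) (d+1) :=
  ∑ g : Fin (d+1) → Fin m, Finsupp.single (fce g) (cg m d hm g)

lemma cg_gzero (m d : ℕ) (hm : 2 ≤ m) :
    cg m d hm (fun _ => (⟨0, Nat.lt_of_lt_of_le Nat.zero_lt_two hm⟩ : Fin m)) = 1 := by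
  simp only [cg]
  exact Finset.prod_eq_one fun j _ => wv_zero m hm

lemma vEig_ne (m d : ℕ) (hm : 2 ≤ m) : vEig m d hm ≠ 0 := by
  intro h
  have h0 := congrArg (fun v : Cc ℝ (KK m (d+1)) (d+1) =>
    v (fce (fun _ => (⟨0, Nat.lt_of_lt_of_le Nat.zero_lt_two hm⟩ : Fin m)))) h
  simp only [vEig, Finsupp.coe_zero, Pi.zero_apply] at h0
  rw [Finsupp.finset_sum_apply] at h0
  rw [Finset.sum_eq_single_of_mem (fun _ => (⟨0, Nat.lt_of_lt_of_le Nat.zero_lt_two hm⟩ : Fin m))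
    (Finset.mem_univ _) ?hz] at h0
  case hz =>
    intro g _ hg
    rw [Finsupp.single_apply, if_neg (fun hh => hg (fce_injective hh))]
  rw [Finsupp.single_apply, if_pos rfl, cg_gzero m d hm] at h0
  exact one_ne_zero h0

lemma sum_cg (m d : ℕ) (hm : 2 ≤ m) (g : Fin (d+1) → Fin m) :
    ∑ i : Fin (d+1), ∑ x : Fin m, cg m d hm (Function.update g i x)
      = m * cg m d hm g := by
  rw [Finset.sum_eq_single_of_mem (⟨0, Nat.succ_pos d⟩ : Fin (d+1))
    (Finset.mem_univ _) ?hz]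
  case hz =>
    intro i _ hi
    have hmem : i ∈ Finset.univ.erase (⟨0, Nat.succ_pos d⟩ : Fin (d+1)) :=
      Finset.mem_erase.mpr ⟨hi, Finset.mem_univ _⟩
    have hcg : ∀ x : Fin m, cg m d hm (Function.update g i x)
        = wv m hm x * ∏ j ∈ (Finset.univ.erase (⟨0, Nat.succ_pos d⟩ : Fin (d+1))).erase i,
            wv m hm (g j) := by
      intro x
      rw [cg, ← Finset.mul_prod_erase _ _ hmem, Function.update_self]
      congr 1
      refine Finset.prod_congr rfl fun j hj => ?_
      rw [Function.update_of_ne (Finset.ne_of_mem_erase hj)]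
    rw [Finset.sum_congr rfl fun x _ => hcg x, ← Finset.sum_mul, sum_wv m hm, zero_mul]
  · have hcg : ∀ x : Fin m,
        cg m d hm (Function.update g (⟨0, Nat.succ_pos d⟩ : Fin (d+1)) x) = cg m d hm g := by
      intro x
      simp only [cg]
      refine Finset.prod_congr rfl fun j hj => ?_
      rw [Function.update_of_ne (Finset.ne_of_mem_erase hj)]
    rw [Finset.sum_congr rfl fun x _ => hcg x, Finset.sum_const, Finset.card_univ,
      Fintype.card_fin, nsmul_eq_mul]

set_option maxHeartbeats 1000000 in
lemma lap_vEig (m d : ℕ) (hm : 2 ≤ m) :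
    lapCard ℝ (KK m (d+1)) (d+1) (vEig m d hm) = (m:ℝ) • vEig m d hm := by
  rw [lap_eq m d, vEig, map_sum]
  have hper : ∀ g : Fin (d+1) → Fin m,
      (∑ i : Fin (d+1), Top m (d+1) i) (Finsupp.single (fce g) (cg m d hm g))
        = ∑ i : Fin (d+1), ∑ x : Fin m,
            Finsupp.single (fce (Function.update g i x)) (cg m d hm g) := by
    intro g
    rw [LinearMap.sum_apply]
    refine Finset.sum_congr rfl fun i _ => ?_
    rw [Top_single, gOf_fce, Finset.smul_sum]
    refine Finset.sum_congr rfl fun x _ => ?_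
    rw [Finsupp.smul_single', mul_one]
  rw [Finset.sum_congr rfl fun g _ => hper g]
  rw [Finset.sum_comm]
  have hswap : ∀ i : Fin (d+1),
      (∑ g : Fin (d+1) → Fin m, ∑ x : Fin m,
          Finsupp.single (fce (Function.update g i x)) (cg m d hm g))
        = ∑ g : Fin (d+1) → Fin m, ∑ x : Fin m,
            Finsupp.single (fce g) (cg m d hm (Function.update g i x)) := by
    intro i
    have hinv : Function.Involutive
        (fun p : (Fin (d+1) → Fin m) × Fin m => (Function.update p.1 i p.2, p.1 i)) := by
      intro p
      refine Prod.ext ?_ ?_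
      · show Function.update (Function.update p.1 i p.2) i (p.1 i) = p.1
        rw [Function.update_idem, Function.update_eq_self]
      · exact Function.update_self i p.2 p.1
    calc (∑ g : Fin (d+1) → Fin m, ∑ x : Fin m,
            Finsupp.single (fce (Function.update g i x)) (cg m d hm g))
        = ∑ p : (Fin (d+1) → Fin m) × Fin m,
            Finsupp.single (fce (Function.update p.1 i p.2)) (cg m d hm p.1) :=
          (Fintype.sum_prod_type (fun p : (Fin (d+1) → Fin m) × Fin m =>
            Finsupp.single (fce (Function.update p.1 i p.2)) (cg m d hm p.1))).symm
      _ = ∑ p : (Fin (d+1) → Fin m) × Fin m,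
            Finsupp.single (fce p.1) (cg m d hm (Function.update p.1 i p.2)) := by
          refine Fintype.sum_bijective _ hinv.bijective _ _ fun p => ?_
          show Finsupp.single (fce (Function.update p.1 i p.2)) (cg m d hm p.1)
            = Finsupp.single (fce (Function.update p.1 i p.2))
                (cg m d hm (Function.update (Function.update p.1 i p.2) i (p.1 i)))
          rw [Function.update_idem, Function.update_eq_self]
      _ = ∑ g : Fin (d+1) → Fin m, ∑ x : Fin m,
            Finsupp.single (fce g) (cg m d hm (Function.update g i x)) :=
          Fintype.sum_prod_type (fun p : (Fin (d+1) → Fin m) × Fin m =>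
            Finsupp.single (fce p.1) (cg m d hm (Function.update p.1 i p.2)))
  rw [Finset.sum_congr rfl fun i _ => hswap i]
  rw [Finset.sum_comm]
  rw [Finset.smul_sum]
  refine Finset.sum_congr rfl fun g _ => ?_
  have hcol : ∀ (c : Fin (d+1) → Fin m → ℝ),
      (∑ i : Fin (d+1), ∑ x : Fin m, Finsupp.single (fce g) (c i x))
        = Finsupp.single (fce g) (∑ i : Fin (d+1), ∑ x : Fin m, c i x) := by
    intro c
    calc (∑ i : Fin (d+1), ∑ x : Fin m, Finsupp.single (fce g) (c i x))
        = ∑ i : Fin (d+1), Finsupp.lsingle (R := ℝ) (fce g) (∑ x : Fin m, c i x) := by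
          refine Finset.sum_congr rfl fun i _ =>
            (map_sum (Finsupp.lsingle (R := ℝ) (fce g)) (fun x => c i x)
              Finset.univ).symm
      _ = Finsupp.lsingle (R := ℝ) (fce g) (∑ i : Fin (d+1), ∑ x : Fin m, c i x) :=
          (map_sum (Finsupp.lsingle (R := ℝ) (fce g)) (fun i => ∑ x : Fin m, c i x)
            Finset.univ).symm
  rw [hcol, sum_cg m d hm g, Finsupp.smul_single']

lemma hasEig_m (m d : ℕ) (hm : 2 ≤ m) :
    Module.End.HasEigenvalue (lapCard ℝ (KK m (d+1)) (d+1)) (m:ℝ) :=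
  Module.End.hasEigenvalue_of_hasEigenvector
    ⟨Module.End.mem_eigenspace_iff.mpr (lap_vEig m d hm), vEig_ne m d hm⟩

end KmkAux
/-- The combinatorial Laplacian `Δ_{k−1} = ∂_{k−1}†∂_{k−1} + ∂_k∂_k†` of the clique
complex of `K(m,k)` (acting on real chains of faces of cardinality `k`, i.e. simplices of
dimension `k−1`) has spectrum contained in `{0, m, 2m, …, km}`; in particular its smallest
nonzero eigenvalue (spectral gap) is `m`. -/
theorem laplacian_gap_Kmk (m k : ℕ) (hm : 2 ≤ m) (hk : 1 ≤ k) :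
    (∀ μ : ℝ,
        Module.End.HasEigenvalue
          (lapCard ℝ (fun s : Finset (Lex (Fin k × Fin m)) => (KmkGraph m k).IsClique ↑s) k)
          μ → ∃ j : ℕ, j ≤ k ∧ μ = j * m) ∧
      Module.End.HasEigenvalue
        (lapCard ℝ (fun s : Finset (Lex (Fin k × Fin m)) => (KmkGraph m k).IsClique ↑s) k)
        (m : ℝ) ∧
      ∀ μ : ℝ,
        Module.End.HasEigenvalue
          (lapCard ℝ (fun s : Finset (Lex (Fin k × Fin m)) => (KmkGraph m k).IsClique ↑s) k)
          μ → μ ≠ 0 → (m : ℝ) ≤ μ := by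
  obtain ⟨d, rfl⟩ : ∃ d, k = d + 1 := ⟨k - 1, by omega⟩
  have hm0 : (m:ℝ) ≠ 0 := Nat.cast_ne_zero.mpr (by omega)
  refine ⟨?_, ?_, ?_⟩
  · intro μ hμ
    exact KmkAux.main_ann m d hm0 hμ
  · exact KmkAux.hasEig_m m d hm
  · intro μ hμ hne
    obtain ⟨j, hj, rfl⟩ := KmkAux.main_ann m d hm0 hμ
    have hj1 : 1 ≤ j := by
      rcases Nat.eq_zero_or_pos j with rfl | h
      · simp at hne
      · exact h
    have h1 : (1:ℝ) ≤ (j:ℝ) := by exact_mod_cast hj1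
    have h2 : (0:ℝ) ≤ (m:ℝ) := by positivity
    nlinarith
end

section
/- Suppose a unitary V and projector Π = |0⟩⟨0| ⊗ P block-encode H/λ, i.e., Π V Π = |0⟩⟨0| ⊗ H/λ, with V Hermitian. Let |k⟩ be an eigenstate of H with eigenvalue E_k satisfying P|k⟩ = |k⟩, and write V|0⟩|k⟩ = (E_k/λ)|0⟩|k⟩ + i√(1−|E_k/λ|²)|0k⊥⟩ with Π|0k⊥⟩ = 0. Then the walk operator W = RV with R = i(2Π − I) satisfies W|0⟩|k⟩ = i(E_k/λ)|0⟩|k⟩ + √(1−|E_k/λ|²)|0k⊥⟩, and the states (|0⟩|k⟩ ± |0k⊥⟩)/√2 are eigenvectors of W with eigenvalues ± e^{± i arcsin(E_k/λ)}. -/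
open scoped ComplexInnerProductSpace in
/-- Qubitization.  Let `Π` be an orthogonal projector (`Π = |0⟩⟨0| ⊗ P`), `V` a Hermitian
unitary block-encoding `H/λ` (so that `V|0⟩|k⟩ = (E/λ)|0⟩|k⟩ + i√(1−(E/λ)²)|0k⊥⟩` with
`Π|0⟩|k⟩ = |0⟩|k⟩` and `Π|0k⊥⟩ = 0`).  Then the walk operator `W = i(2Π − 1)V` satisfies
`W|0⟩|k⟩ = i(E/λ)|0⟩|k⟩ + √(1−(E/λ)²)|0k⊥⟩`, and `(|0⟩|k⟩ ± |0k⊥⟩)/√2` are eigenvectors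
of `W` with eigenvalues `±e^{±i·arcsin(E/λ)}`. -/
theorem qubitization_walk_eigenvectors
    {Hsp : Type*} [NormedAddCommGroup Hsp] [InnerProductSpace ℂ Hsp] [FiniteDimensional ℂ Hsp]
    (P V : Hsp →ₗ[ℂ] Hsp)
    (hPproj : P ∘ₗ P = P) (hPsym : P.IsSymmetric)
    (hVsym : V.IsSymmetric) (hVunit : V ∘ₗ V = LinearMap.id)
    (ψ φ : Hsp) (hψ : ‖ψ‖ = 1) (hφ : ‖φ‖ = 1)
    (hPψ : P ψ = ψ) (hPφ : P φ = 0)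
    (E lam : ℝ) (hlam : 0 < lam) (hE : |E| < lam)
    (hVψ : V ψ = ((E / lam : ℝ) : ℂ) • ψ +
      (Complex.I * (Real.sqrt (1 - (E / lam) ^ 2) : ℂ)) • φ)
    (W : Hsp →ₗ[ℂ] Hsp)
    (hW : W = (Complex.I • ((2 : ℂ) • P - LinearMap.id)) ∘ₗ V) :
    W ψ = (Complex.I * ((E / lam : ℝ) : ℂ)) • ψ +
        ((Real.sqrt (1 - (E / lam) ^ 2) : ℝ) : ℂ) • φ ∧
      W (((Real.sqrt 2)⁻¹ : ℂ) • (ψ + φ)) =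
        Complex.exp (Complex.I * (Real.arcsin (E / lam) : ℂ)) •
          (((Real.sqrt 2)⁻¹ : ℂ) • (ψ + φ)) ∧
      W (((Real.sqrt 2)⁻¹ : ℂ) • (ψ - φ)) =
        (-Complex.exp (-(Complex.I * (Real.arcsin (E / lam) : ℂ)))) •
          (((Real.sqrt 2)⁻¹ : ℂ) • (ψ - φ)) := by
  have hcabs : |E / lam| < 1 := by
    rw [abs_div, abs_of_pos hlam]
    exact (div_lt_one hlam).2 hE
  set c : ℝ := E / lam with hcdef
  have hc2 : c ^ 2 < 1 := by
    have := abs_nonneg c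
    calc c ^ 2 = |c| ^ 2 := (sq_abs c).symm
    _ < 1 := by nlinarith
  set s : ℝ := Real.sqrt (1 - c ^ 2) with hsdef
  have hs2 : s ^ 2 = 1 - c ^ 2 := Real.sq_sqrt (by linarith)
  have hspos : 0 < s := Real.sqrt_pos.2 (by linarith)
  have hsC : (s : ℂ) ≠ 0 := by exact_mod_cast hspos.ne'
  clear_value c s
  have hs2C : (s : ℂ) ^ 2 = 1 - (c : ℂ) ^ 2 := by
    exact_mod_cast hs2
  have hVV : V (V ψ) = ψ := by
    have := LinearMap.congr_fun hVunit ψ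
    simpa using this
  rw [hVψ, map_add, map_smul, map_smul, hVψ] at hVV
  have hVφ : V φ = (-(Complex.I * s)) • ψ + (-(c : ℂ)) • φ := by
    have hinj : Function.Injective (fun x : Hsp => (Complex.I * (s:ℂ)) • x) :=
      smul_right_injective Hsp (by simp [hsC, Complex.I_ne_zero])
    apply hinj
    have h : (Complex.I * (s:ℂ)) • V φ = ψ - (c:ℂ) • ((c:ℂ) • ψ + (Complex.I * (s:ℂ)) • φ) := eq_sub_of_add_eq' hVV
    show (Complex.I * (s:ℂ)) • V φ = _
    rw [h]
    match_scalars <;>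
      first
        | ring1
        | linear_combination (s:ℂ)^2 * Complex.I_sq - hs2C
        | linear_combination (-(s:ℂ)) * Complex.I_sq
  have hWgen : ∀ z : Hsp, ∀ a b : ℂ,
      V z = a • ψ + b • φ → W z = (Complex.I * a) • ψ + (-(Complex.I * b)) • φ := by
    intro z a b hVz
    rw [hW]
    simp only [LinearMap.comp_apply, LinearMap.smul_apply, LinearMap.sub_apply,
      LinearMap.smul_apply, LinearMap.id_apply, hVz, map_add, map_smul, hPψ, hPφ]
    module
  have hWψ : W ψ = (Complex.I * (c:ℂ)) • ψ + (s:ℂ) • φ := by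
    have := hWgen ψ ((c:ℂ)) (Complex.I * (s:ℂ)) hVψ
    rw [this]
    match_scalars <;>
      first
        | ring1
        | linear_combination (-(s:ℂ)) * Complex.I_sq
  have hWφ : W φ = (s:ℂ) • ψ + (Complex.I * (c:ℂ)) • φ := by
    have := hWgen φ (-(Complex.I * (s:ℂ))) (-(c:ℂ)) hVφ
    rw [this]
    match_scalars <;>
      first
        | ring1
        | linear_combination (-(s:ℂ)) * Complex.I_sq
  have hsin : Real.sin (Real.arcsin c) = c := Real.sin_arcsin (by nlinarith [abs_le.mp hcabs.le]) (by nlinarith [abs_le.mp hcabs.le])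
  have hcos : Real.cos (Real.arcsin c) = s := by rw [Real.cos_arcsin]; exact hsdef.symm
  have hexp : Complex.exp (Complex.I * (Real.arcsin c : ℂ)) = (s:ℂ) + (c:ℂ) * Complex.I := by
    rw [mul_comm, Complex.exp_mul_I, ← Complex.ofReal_cos, ← Complex.ofReal_sin, hsin, hcos]
  have hexp' : -Complex.exp (-(Complex.I * (Real.arcsin c : ℂ))) = -(s:ℂ) + (c:ℂ) * Complex.I := by
    rw [show -(Complex.I * ((Real.arcsin c : ℝ):ℂ)) = ((-Real.arcsin c : ℝ):ℂ) * Complex.I by push_cast; ring,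
      Complex.exp_mul_I, ← Complex.ofReal_cos, ← Complex.ofReal_sin, Real.cos_neg, Real.sin_neg, hsin, hcos]
    push_cast; ring
  refine ⟨?_, ?_, ?_⟩
  · rw [hWψ]
  · rw [map_smul, map_add, hWψ, hWφ, hexp]
    module
  · rw [map_smul, map_sub, hWψ, hWφ, hexp']
    module
end

section
/- In the qubitization setup with projector-modified reflection, the walk operator also satisfies W|χk⊥⟩ = i(E_k/λ)|χk⊥⟩ + √(1−|E_k/λ|²)|χ⟩|k⟩ (with no factor of i on the second term). -/
/-- In the qubitization setup with projector-modified reflection, the walk operator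
`W = i(2Π − 1)V` also satisfies
`W|χk⊥⟩ = i(E/λ)|χk⊥⟩ + √(1−(E/λ)²)|χ⟩|k⟩` (no factor of `i` on the second term). -/
theorem qubitization_walk_on_perp
    {Hsp : Type*} [NormedAddCommGroup Hsp] [InnerProductSpace ℂ Hsp] [FiniteDimensional ℂ Hsp]
    (P V : Hsp →ₗ[ℂ] Hsp)
    (hPproj : P ∘ₗ P = P) (hPsym : P.IsSymmetric)
    (hVsym : V.IsSymmetric) (hVunit : V ∘ₗ V = LinearMap.id)
    (ψ φ : Hsp) (hψ : ‖ψ‖ = 1) (hφ : ‖φ‖ = 1)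
    (hPψ : P ψ = ψ) (hPφ : P φ = 0)
    (E lam : ℝ) (hlam : 0 < lam) (hE : |E| < lam)
    (hVψ : V ψ = ((E / lam : ℝ) : ℂ) • ψ +
      (Complex.I * (Real.sqrt (1 - (E / lam) ^ 2) : ℂ)) • φ)
    (W : Hsp →ₗ[ℂ] Hsp)
    (hW : W = (Complex.I • ((2 : ℂ) • P - LinearMap.id)) ∘ₗ V) :
    W φ = (Complex.I * ((E / lam : ℝ) : ℂ)) • φ +
      ((Real.sqrt (1 - (E / lam) ^ 2) : ℝ) : ℂ) • ψ := by
  set x : ℂ := ((E / lam : ℝ) : ℂ) with hx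
  set s : ℝ := Real.sqrt (1 - (E / lam) ^ 2) with hs
  set c : ℂ := Complex.I * (s : ℂ) with hcdef
  have hx2 : (E / lam) ^ 2 < 1 := by
    have h1 : |E / lam| < 1 := by
      rw [abs_div, abs_of_pos hlam]
      exact (div_lt_one hlam).mpr hE
    calc (E / lam) ^ 2 = |E / lam| ^ 2 := by rw [sq_abs]
      _ < 1 := by nlinarith [abs_nonneg (E / lam)]
  have hspos : 0 < s := Real.sqrt_pos.mpr (by linarith)
  have hs2 : (s : ℂ) ^ 2 = 1 - x ^ 2 := by
    have h : s ^ 2 = 1 - (E / lam) ^ 2 := Real.sq_sqrt (by linarith)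
    rw [hx, ← Complex.ofReal_pow, h]
    push_cast
    ring
  have hsne : (s : ℂ) ≠ 0 := by exact_mod_cast hspos.ne'
  have hcne : c ≠ 0 := mul_ne_zero Complex.I_ne_zero hsne
  have hVVψ : V (V ψ) = ψ := by
    have := congrArg (fun f => f ψ) hVunit
    simpa using this
  have h1 : ψ = x • (x • ψ + c • φ) + c • V φ := by
    calc ψ = V (V ψ) := hVVψ.symm
      _ = V (x • ψ + c • φ) := by rw [hVψ]
      _ = x • V ψ + c • V φ := by rw [map_add, map_smul, map_smul]
      _ = x • (x • ψ + c • φ) + c • V φ := by rw [hVψ]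
  have h2 : c • V φ = ψ - x • (x • ψ + c • φ) := eq_sub_of_add_eq' h1.symm
  have h3 : ψ - x • (x • ψ + c • φ) = c • ((-c) • ψ - x • φ) := by
    match_scalars
    · linear_combination (-1 : ℂ) * hs2 + (s : ℂ)^2 * Complex.I_sq
    · ring
  have hVφ : V φ = (-c) • ψ - x • φ :=
    smul_right_injective Hsp hcne (h2.trans h3)
  rw [hW]
  simp only [LinearMap.comp_apply, LinearMap.smul_apply, LinearMap.sub_apply,
    LinearMap.id_apply, hVφ, map_sub, map_smul, hPψ, hPφ, smul_zero]
  match_scalars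
  · linear_combination (-(s : ℂ)) * Complex.I_sq
  · ring
end
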